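/- If two sequences of pairwise distinct cards (a_1,...,a_ℓ) and (b_1,...,b_ℓ) in Z_2^n realize the same quad code, then there exists an affine transformation f of Z_2^n with f(a_i) = b_i for all i; conversely, applying an affine transformation to a sequence of cards does not change the realized quad code. -/

import Mathlib

lemma zmod2_vec_neg {n : ℕ} (v : Fin n → ZMod 2) : -v = v := by
  funext k
  have h : ∀ x : ZMod 2, -x = x := by decide
  exact h (v k)

lemma zmod2_add_self (x : ZMod 2) : x + x = 0 := by revert x; decide

lemma helper {n ℓ : ℕ} (hℓ : 0 < ℓ) (a : Fin ℓ → (Fin n → ZMod 2)) (d : Fin ℓ → ZMod 2) :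
    (∑ i, (d i + (∑ j, d j) * (Pi.single (⟨0, hℓ⟩ : Fin ℓ) (1 : ZMod 2) : Fin ℓ → ZMod 2) i) = 0) ∧
    ∑ i, (d i + (∑ j, d j) * (Pi.single (⟨0, hℓ⟩ : Fin ℓ) (1 : ZMod 2) : Fin ℓ → ZMod 2) i) • a i
      = ∑ i, d i • (a i - a ⟨0, hℓ⟩) := by
  set i0 : Fin ℓ := ⟨0, hℓ⟩
  set S : ZMod 2 := ∑ j, d j with hS
  have hsingle : ∑ i, (Pi.single i0 (1 : ZMod 2) : Fin ℓ → ZMod 2) i • a i = a i0 := by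
    rw [Finset.sum_eq_single i0]
    · simp
    · intro j _ hj; rw [Pi.single_eq_of_ne hj]; simp
    · simp
  have hsum1 : ∑ i, (Pi.single i0 (1 : ZMod 2) : Fin ℓ → ZMod 2) i = 1 := by
    rw [Finset.sum_eq_single i0]
    · simp
    · intro j _ hj; exact Pi.single_eq_of_ne hj 1
    · simp
  constructor
  · simp only [Finset.sum_add_distrib, ← Finset.mul_sum, hsum1, mul_one, ← hS]
    exact zmod2_add_self S
  · have lhs : ∑ i, (d i + S * (Pi.single i0 (1 : ZMod 2) : Fin ℓ → ZMod 2) i) • a i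
        = (∑ i, d i • a i) + S • a i0 := by
      simp only [add_smul, Finset.sum_add_distrib]
      congr 1
      simp only [mul_smul, ← Finset.smul_sum, hsingle]
    have rhs : ∑ i, d i • (a i - a i0) = (∑ i, d i • a i) + S • a i0 := by
      simp only [smul_sub, Finset.sum_sub_distrib, ← Finset.sum_smul, ← hS]
      rw [sub_eq_add_neg, zmod2_vec_neg]
    rw [lhs, rhs]

lemma parity_lemma {ℓ : ℕ} (c : Fin ℓ → ZMod 2) :
    Even (hammingNorm c) ↔ ∑ i, c i = 0 := by
  have hx : ∀ x : ZMod 2, x ≠ 0 → x = 1 := by decide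
  have h1 : ∑ i, c i = (hammingNorm c : ZMod 2) := by
    rw [hammingNorm, ← Finset.sum_filter_ne_zero Finset.univ, Finset.card_eq_sum_ones,
      Nat.cast_sum]
    exact Finset.sum_congr rfl fun i hi => by
      rw [hx _ (Finset.mem_filter.1 hi).2]; simp
  rw [h1, ZMod.natCast_eq_zero_iff, ← even_iff_two_dvd]

lemma key_lemma {K V W : Type*} [Field K] [AddCommGroup V] [Module K V]
    [AddCommGroup W] [Module K W] [FiniteDimensional K V] [FiniteDimensional K W]
    (φ ψ : V →ₗ[K] W) (h : LinearMap.ker φ = LinearMap.ker ψ) :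
    ∃ M : W ≃ₗ[K] W, ∀ v, M (φ v) = ψ v := by
  obtain ⟨p, hp⟩ := Submodule.exists_isCompl (LinearMap.range φ)
  obtain ⟨q, hq⟩ := Submodule.exists_isCompl (LinearMap.range ψ)
  have hrank : Module.finrank K (LinearMap.range φ) = Module.finrank K (LinearMap.range ψ) := by
    have h1 := LinearMap.finrank_range_add_finrank_ker φ
    have h2 := LinearMap.finrank_range_add_finrank_ker ψ
    rw [h] at h1; omega
  have hpq : Module.finrank K p = Module.finrank K q := by
    have h1 := Submodule.finrank_add_eq_of_isCompl hp
    have h2 := Submodule.finrank_add_eq_of_isCompl hq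
    omega
  obtain ⟨g2⟩ := FiniteDimensional.nonempty_linearEquiv_of_finrank_eq hpq
  set g : LinearMap.range φ ≃ₗ[K] LinearMap.range ψ :=
    φ.quotKerEquivRange.symm.trans ((Submodule.quotEquivOfEq _ _ h).trans ψ.quotKerEquivRange)
  have hg : ∀ v, (g ⟨φ v, LinearMap.mem_range_self φ v⟩ : W) = ψ v := by
    intro v
    have h5 : φ.quotKerEquivRange.symm ⟨φ v, LinearMap.mem_range_self φ v⟩
        = Submodule.Quotient.mk v := φ.quotKerEquivRange_symm_apply_image v _
    simp [g, h5, Submodule.quotEquivOfEq_mk, LinearMap.quotKerEquivRange_apply_mk]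
  refine ⟨(Submodule.prodEquivOfIsCompl _ _ hp).symm.trans
    ((g.prodCongr g2).trans (Submodule.prodEquivOfIsCompl _ _ hq)), fun v => ?_⟩
  have h3 := Submodule.prodEquivOfIsCompl_symm_apply_left (LinearMap.range φ) p hp
    ⟨φ v, LinearMap.mem_range_self φ v⟩
  simp [h3, Submodule.coe_prodEquivOfIsCompl', hg]

/-- Two sequences of distinct cards realize the same quad code iff they differ by
an affine transformation. -/
theorem same_quad_code_iff_affine (n ℓ : ℕ)
    (a b : Fin ℓ → (Fin n → ZMod 2))
    (ha : Function.Injective a) (hb : Function.Injective b) :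
    ((∀ c : Fin ℓ → ZMod 2,
        (Even (hammingNorm c) ∧ ∑ i, c i • a i = 0) ↔
        (Even (hammingNorm c) ∧ ∑ i, c i • b i = 0)) →
      ∃ (M : (Fin n → ZMod 2) ≃ₗ[ZMod 2] (Fin n → ZMod 2)) (t : Fin n → ZMod 2),
        ∀ i, M (a i) + t = b i) ∧
    (∀ (M : (Fin n → ZMod 2) ≃ₗ[ZMod 2] (Fin n → ZMod 2)) (t : Fin n → ZMod 2),
      (∀ i, M (a i) + t = b i) →
      ∀ c : Fin ℓ → ZMod 2,
        (Even (hammingNorm c) ∧ ∑ i, c i • a i = 0) ↔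
        (Even (hammingNorm c) ∧ ∑ i, c i • b i = 0)) := by
  constructor
  · intro hcode
    rcases Nat.eq_zero_or_pos ℓ with hℓ | hℓ
    · subst hℓ
      exact ⟨LinearEquiv.refl _ _, 0, fun i => i.elim0⟩
    set i0 : Fin ℓ := ⟨0, hℓ⟩
    set φ : (Fin ℓ → ZMod 2) →ₗ[ZMod 2] (Fin n → ZMod 2) :=
      Fintype.linearCombination (ZMod 2) (fun i => a i - a i0) with hφ
    set ψ : (Fin ℓ → ZMod 2) →ₗ[ZMod 2] (Fin n → ZMod 2) :=
      Fintype.linearCombination (ZMod 2) (fun i => b i - b i0) with hψ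
    have hφ' : ∀ d, φ d = ∑ i, d i • (a i - a i0) := fun d =>
      Fintype.linearCombination_apply _ _ d
    have hψ' : ∀ d, ψ d = ∑ i, d i • (b i - b i0) := fun d =>
      Fintype.linearCombination_apply _ _ d
    have hker : LinearMap.ker φ = LinearMap.ker ψ := by
      ext d
      simp only [LinearMap.mem_ker, hφ', hψ']
      set c : Fin ℓ → ZMod 2 :=
        fun i => d i + (∑ j, d j) * (Pi.single i0 (1 : ZMod 2) : Fin ℓ → ZMod 2) i with hc
      obtain ⟨hca0, hca⟩ := helper hℓ a d
      obtain ⟨_, hcb⟩ := helper hℓ b d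
      have heven : Even (hammingNorm c) := (parity_lemma c).2 hca0
      rw [← hca, ← hcb]
      constructor
      · intro h0
        exact ((hcode c).1 ⟨heven, h0⟩).2
      · intro h0
        exact ((hcode c).2 ⟨heven, h0⟩).2
    obtain ⟨M, hM⟩ := key_lemma φ ψ hker
    refine ⟨M, b i0 - M (a i0), fun i => ?_⟩
    have h1 := hM (Pi.single i 1)
    have h2 : φ (Pi.single i 1) = a i - a i0 := by
      rw [hφ']
      rw [Finset.sum_eq_single i]
      · simp
      · intro j _ hj
        rw [Pi.single_eq_of_ne hj, zero_smul]
      · simp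
    have h3 : ψ (Pi.single i 1) = b i - b i0 := by
      rw [hψ']
      rw [Finset.sum_eq_single i]
      · simp
      · intro j _ hj
        rw [Pi.single_eq_of_ne hj, zero_smul]
      · simp
    rw [h2, h3, map_sub] at h1
    have : M (a i) - M (a i0) + (b i0) = b i := by rw [h1]; abel
    rw [← this]; abel
  · intro M t hMt c
    refine and_congr_right fun heven => ?_
    have hc0 : ∑ i, c i = 0 := (parity_lemma c).1 heven
    have hsum : ∑ i, c i • b i = M (∑ i, c i • a i) := by
      calc ∑ i, c i • b i = ∑ i, c i • (M (a i) + t) := by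
            refine Finset.sum_congr rfl fun i _ => by rw [hMt i]
        _ = (∑ i, c i • M (a i)) + (∑ i, c i) • t := by
            simp only [smul_add, Finset.sum_add_distrib, Finset.sum_smul]
        _ = ∑ i, c i • M (a i) := by rw [hc0, zero_smul, add_zero]
        _ = M (∑ i, c i • a i) := by rw [map_sum]; simp only [map_smul]
    rw [hsum]
    exact ⟨fun h => by rw [h, map_zero],
      fun h => M.injective (by rw [h, map_zero])⟩
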